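/- Fix α ∈ (0,1), T > 0 and λ ≥ 0. There exist constants C > 0 and Δt₀ > 0, depending only on α, T, λ, such that: for every integer N ≥ 1 with Δt = T/N ≤ Δt₀, every g ≥ 0, and every sequence of nonnegative reals w₀, w₁, …, w_N satisfying δᵅwₙ ≤ λwₙ + g for all n ∈ {1,…,N}, one has wₙ ≤ C(w₀ + g) for all n ∈ {0,…,N}. -/

import Mathlib

/-- The L1 weights `b_j(β) = j^β - (j-1)^β`. -/
noncomputable def bcoef (β : ℝ) (j : ℕ) : ℝ := (j : ℝ) ^ β - ((j : ℝ) - 1) ^ β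

/-- The scalar L1 discretization of the Caputo derivative of order `α` with time step `Δt`. -/
noncomputable def L1delta (α Δt : ℝ) (w : ℕ → ℝ) (n : ℕ) : ℝ :=
  (Δt ^ (-α) / Real.Gamma (2 - α)) *
    ∑ i ∈ Finset.range n, bcoef (1 - α) (n - i) * (w (i + 1) - w i)

lemma bcoef_lower {β : ℝ} (h0 : 0 < β) (h1 : β < 1) {j : ℕ} (hj : 1 ≤ j) :
    β * (j : ℝ) ^ (β - 1) ≤ bcoef β j := by
  have hx : (1 : ℝ) ≤ (j : ℝ) := by exact_mod_cast hj
  have hx0 : (0 : ℝ) < (j : ℝ) := by linarith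
  set x := (j : ℝ)
  have hs : (-1 : ℝ) ≤ -1/x := by
    rw [neg_div]
    have : 1/x ≤ 1 := by
      rw [div_le_one hx0]; exact hx
    linarith
  have hb := rpow_one_add_le_one_add_mul_self hs h0.le h1.le
  have hmul : (x * (1 + -1/x)) ^ β ≤ x ^ β * (1 + β * (-1/x)) := by
    rw [Real.mul_rpow hx0.le (by nlinarith [hs] : (0:ℝ) ≤ 1 + -1/x)]
    exact mul_le_mul_of_nonneg_left hb (Real.rpow_nonneg hx0.le β)
  have hxe : x * (1 + -1/x) = x - 1 := by field_simp; ring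
  have hpow : x ^ β * (1 + β * (-1/x)) = x ^ β - β * x ^ (β - 1) := by
    have : x ^ (β - 1) = x ^ β * x⁻¹ := by
      rw [show β - 1 = β + (-1) by ring, Real.rpow_add hx0, Real.rpow_neg_one]
    rw [this]; field_simp; ring
  rw [hxe, hpow] at hmul
  simp only [bcoef]
  linarith

lemma bcoef_upper {β : ℝ} (h0 : 0 < β) (h1 : β < 1) {j : ℕ} (hj : 1 ≤ j) :
    bcoef β (j + 1) ≤ β * (j : ℝ) ^ (β - 1) := by
  have hx : (1 : ℝ) ≤ (j : ℝ) := by exact_mod_cast hj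
  have hx0 : (0 : ℝ) < (j : ℝ) := by linarith
  set x := (j : ℝ)
  have hs : (-1 : ℝ) ≤ 1/x := by
    have h1x : (0:ℝ) ≤ 1/x := by positivity
    linarith
  have hb := rpow_one_add_le_one_add_mul_self hs h0.le h1.le
  have hmul : (x * (1 + 1/x)) ^ β ≤ x ^ β * (1 + β * (1/x)) := by
    rw [Real.mul_rpow hx0.le (by positivity : (0:ℝ) ≤ 1 + 1/x)]
    exact mul_le_mul_of_nonneg_left hb (Real.rpow_nonneg hx0.le β)
  have hxe : x * (1 + 1/x) = x + 1 := by field_simp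
  have hpow : x ^ β * (1 + β * (1/x)) = x ^ β + β * x ^ (β - 1) := by
    have : x ^ (β - 1) = x ^ β * x⁻¹ := by
      rw [show β - 1 = β + (-1) by ring, Real.rpow_add hx0, Real.rpow_neg_one]
    rw [this]; field_simp
  rw [hxe, hpow] at hmul
  simp only [bcoef]
  push_cast
  have : ((j : ℝ) + 1) - 1 = x := by ring
  rw [this]
  linarith

lemma bcoef_anti {β : ℝ} (h0 : 0 < β) (h1 : β < 1) {j : ℕ} (hj : 1 ≤ j) :
    bcoef β (j + 1) ≤ bcoef β j :=
  (bcoef_upper h0 h1 hj).trans (bcoef_lower h0 h1 hj)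

lemma bcoef_pos {β : ℝ} (h0 : 0 < β) (h1 : β < 1) {j : ℕ} (hj : 1 ≤ j) :
    0 < bcoef β j := by
  have := bcoef_lower h0 h1 hj
  have hx0 : (0 : ℝ) < (j : ℝ) := by exact_mod_cast hj
  nlinarith [Real.rpow_pos_of_pos hx0 (β - 1)]

lemma bcoef_one {β : ℝ} (h0 : 0 < β) : bcoef β 1 = 1 := by
  simp [bcoef, Real.zero_rpow (ne_of_gt h0)]

lemma L1_identity (β : ℝ) (w : ℕ → ℝ) (m : ℕ) :
    ∑ i ∈ Finset.range (m+1), bcoef β (m+1-i) * (w (i+1) - w i)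
      = bcoef β 1 * w (m+1) - bcoef β (m+1) * w 0
        - ∑ i ∈ Finset.range m, (bcoef β (m-i) - bcoef β (m+1-i)) * w (i+1) := by
  have h1 : ∑ i ∈ Finset.range (m+1), bcoef β (m+1-i) * (w (i+1) - w i)
      = (∑ i ∈ Finset.range (m+1), bcoef β (m+1-i) * w (i+1))
        - ∑ i ∈ Finset.range (m+1), bcoef β (m+1-i) * w i := by
    rw [← Finset.sum_sub_distrib]
    exact Finset.sum_congr rfl (fun i _ => by ring)
  rw [h1, Finset.sum_range_succ (fun i => bcoef β (m+1-i) * w (i+1)),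
      Finset.sum_range_succ' (fun i => bcoef β (m+1-i) * w i)]
  simp only [Nat.add_sub_cancel_left, Nat.sub_self, Nat.add_sub_cancel]
  simp only [Nat.sub_zero]
  have e2 : ∑ i ∈ Finset.range m, bcoef β (m+1-(i+1)) * w (i+1)
      = ∑ i ∈ Finset.range m, bcoef β (m-i) * w (i+1) :=
    Finset.sum_congr rfl (fun i hi => by congr 2; omega)
  rw [e2]
  have e3 : ∑ i ∈ Finset.range m, (bcoef β (m-i) - bcoef β (m+1-i)) * w (i+1)
      = (∑ i ∈ Finset.range m, bcoef β (m-i) * w (i+1))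
        - ∑ i ∈ Finset.range m, bcoef β (m+1-i) * w (i+1) := by
    rw [← Finset.sum_sub_distrib]
    exact Finset.sum_congr rfl (fun i _ => by ring)
  rw [e3]; ring


lemma gronwall_key_caseA {κ lam E b D : ℝ} (hκ : 0 < κ) (hlam : 0 ≤ lam) (hb : 0 ≤ b)
    (hE1 : 1 ≤ E) (hD : 0 ≤ D) (hlowb : 4*(lam+1) ≤ κ * b) :
    1 + κ*b + 2*lam*E ≤ 2*κ*E*b + 2*κ*D := by
  have h1 : 0 ≤ κ*b*(E-1) := mul_nonneg (mul_nonneg hκ.le hb) (by linarith)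
  have h2 : 4*(lam+1)*E ≤ (κ*b)*E := mul_le_mul_of_nonneg_right hlowb (by linarith)
  have h3 : 0 ≤ lam*E := mul_nonneg hlam (by linarith)
  have h4 : 0 ≤ κ*D := mul_nonneg hκ.le hD
  nlinarith [h1, h2, h3, h4]

lemma gronwall_key_caseB {κ lam E b bj D : ℝ} (hκ : 0 < κ) (hlam : 0 ≤ lam) (hb : 0 ≤ b)
    (hE1 : 1 ≤ E) (hlowbj : 4*(lam+1) ≤ κ * bj) (hDlow : (E/2)*(bj - b) ≤ D) :
    1 + κ*b + 2*lam*E ≤ 2*κ*E*b + 2*κ*D := by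
  have hE0 : (0:ℝ) < E := by linarith only [hE1]
  have h1 : 0 ≤ κ*b*(E-1) := mul_nonneg (mul_nonneg hκ.le hb) (by linarith)
  have h2 : 4*(lam+1)*E ≤ (κ*bj)*E := mul_le_mul_of_nonneg_right hlowbj hE0.le
  have h3 : 0 ≤ lam*E := mul_nonneg hlam hE0.le
  have h4 : κ*((E/2)*(bj-b)) ≤ κ*D := mul_le_mul_of_nonneg_left hDlow hκ.le
  nlinarith [h1, h2, h3, h4]

lemma gronwall_step {κ lam E b g w0 wn Sw S2 D : ℝ}
    (hrec : κ * (wn - b * w0 - Sw) ≤ lam * wn + g)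
    (hS2eq : S2 = E * (1 - b) - D)
    (hSw : Sw ≤ 2 * S2 * (w0 + g))
    (hkey : 1 + κ * b + 2 * lam * E ≤ 2 * κ * E * b + 2 * κ * D)
    (hκ : 0 < κ) (hκl : lam + 1 ≤ κ) (hb : 0 ≤ b) (hw0 : 0 ≤ w0) (hg : 0 ≤ g)
    (hE1 : 1 ≤ E) :
    wn ≤ 2 * E * (w0 + g) := by
  have hexp : κ * (wn - b*w0 - Sw) = κ*wn - κ*b*w0 - κ*Sw := by ring
  rw [hexp] at hrec
  have h1 : κ * Sw ≤ κ * (2*S2*(w0+g)) := mul_le_mul_of_nonneg_left hSw hκ.le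
  have h3 : 0 ≤ κ*b*g := mul_nonneg (mul_nonneg hκ.le hb) hg
  have hS2v : κ * (2*S2*(w0+g)) = 2*κ*(E*(1-b) - D)*(w0+g) := by rw [hS2eq]; ring
  have hcmp : 1 + κ*b + 2*κ*(E*(1-b) - D) ≤ 2*(κ-lam)*E := by nlinarith [hkey]
  have hw0g : 0 ≤ w0 + g := by linarith
  have hbig : (1 + κ*b + 2*κ*(E*(1-b)-D)) * (w0+g) ≤ (2*(κ-lam)*E) * (w0+g) :=
    mul_le_mul_of_nonneg_right hcmp hw0g
  have hfin : (κ - lam) * wn ≤ (κ - lam) * (2*E*(w0+g)) := by nlinarith [hrec, h1, h3, hbig, hS2v]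
  exact le_of_mul_le_mul_left hfin (by linarith)


set_option maxHeartbeats 1000000 in
/-- Discrete fractional Grönwall inequality with a constant source:
`δᵅwₙ ≤ λwₙ + g` implies `wₙ ≤ C(w₀ + g)`. -/
theorem stmt_10 (α T lam : ℝ) (hα : α ∈ Set.Ioo (0 : ℝ) 1) (hT : 0 < T) (hlam : 0 ≤ lam) :
    ∃ C Δt₀ : ℝ, 0 < C ∧ 0 < Δt₀ ∧
      ∀ (N : ℕ), 1 ≤ N → T / (N : ℝ) ≤ Δt₀ →
      ∀ (g : ℝ), 0 ≤ g →
      ∀ (w : ℕ → ℝ), (∀ n, n ≤ N → 0 ≤ w n) →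
        (∀ n, n ∈ Finset.Icc 1 N → L1delta α (T / (N : ℝ)) w n ≤ lam * w n + g) →
        ∀ n, n ≤ N → w n ≤ C * (w 0 + g) := by
  obtain ⟨hα0, hα1⟩ := hα
  have hαne : α ≠ 0 := ne_of_gt hα0
  have hβ0 : (0:ℝ) < 1 - α := by linarith
  have hβ1 : (1:ℝ) - α < 1 := by linarith
  have hβne : (1:ℝ) - α ≠ 0 := ne_of_gt hβ0
  have hΓ : 0 < Real.Gamma (2 - α) := Real.Gamma_pos_of_pos (by linarith)
  have hΓne : Real.Gamma (2 - α) ≠ 0 := ne_of_gt hΓ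
  obtain ⟨X, hXdef⟩ : ∃ x : ℝ, x = 8 * Real.Gamma (2 - α) * (lam + 1) / (1 - α) := ⟨_, rfl⟩
  have hXpos : 0 < X := by
    rw [hXdef]
    exact div_pos (mul_pos (mul_pos (by norm_num) hΓ) (by linarith)) hβ0
  obtain ⟨μ, hμdef⟩ : ∃ x : ℝ, x = X ^ (α⁻¹ : ℝ) := ⟨_, rfl⟩
  have hμpos : 0 < μ := hμdef ▸ Real.rpow_pos_of_pos hXpos _
  have hμne : μ ≠ 0 := ne_of_gt hμpos
  have hμα : μ ^ (α:ℝ) = X := by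
    rw [hμdef, ← Real.rpow_mul hXpos.le, inv_mul_cancel₀ hαne, Real.rpow_one]
  obtain ⟨Y, hYdef⟩ : ∃ x : ℝ, x = (lam + 1) * Real.Gamma (2 - α) := ⟨_, rfl⟩
  have hYpos : 0 < Y := by
    rw [hYdef]; exact mul_pos (by linarith) hΓ
  refine ⟨2 * Real.exp (μ * T), min (1/μ) (Y ^ (-α⁻¹ : ℝ)), by positivity,
    lt_min (by positivity) (Real.rpow_pos_of_pos hYpos _), ?_⟩
  intro N hN hΔtb g hg w hw hrec
  obtain ⟨Δt, hΔtdef⟩ : ∃ x : ℝ, x = T / (N : ℝ) := ⟨_, rfl⟩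
  rw [← hΔtdef] at hΔtb
  have hrec2 : ∀ n ∈ Finset.Icc 1 N, L1delta α Δt w n ≤ lam * w n + g := by
    rw [hΔtdef]; exact hrec
  have hN0 : (0:ℝ) < (N : ℝ) := by exact_mod_cast hN
  have hΔt0 : 0 < Δt := by rw [hΔtdef]; positivity
  have hΔtne : Δt ≠ 0 := ne_of_gt hΔt0
  have hμΔt : μ * Δt ≤ 1 := by
    have h1 := le_trans hΔtb (min_le_left _ _)
    rw [le_div_iff₀ hμpos] at h1
    linarith only [h1]
  have hκY : Y ≤ Δt ^ (-α : ℝ) := by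
    have h2 := le_trans hΔtb (min_le_right _ _)
    have h3 : Δt ^ (α:ℝ) ≤ (Y ^ (-α⁻¹ : ℝ)) ^ (α:ℝ) := Real.rpow_le_rpow hΔt0.le h2 hα0.le
    rw [← Real.rpow_mul hYpos.le] at h3
    rw [show (-α⁻¹) * α = -1 by field_simp, Real.rpow_neg_one] at h3
    rw [Real.rpow_neg hΔt0.le]
    have hp : 0 < Δt ^ (α:ℝ) := Real.rpow_pos_of_pos hΔt0 _
    have h4 := inv_anti₀ hp h3
    rwa [inv_inv] at h4
  obtain ⟨κ, hκdef⟩ : ∃ x : ℝ, x = Δt ^ (-α : ℝ) / Real.Gamma (2 - α) := ⟨_, rfl⟩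
  have hκpos : 0 < κ := by
    rw [hκdef]; exact div_pos (Real.rpow_pos_of_pos hΔt0 _) hΓ
  have hκlam : lam + 1 ≤ κ := by
    rw [hκdef, le_div_iff₀ hΓ]
    rw [hYdef] at hκY
    linarith only [hκY]
  -- key lower bound on κ * bcoef
  have hlow : ∀ j : ℕ, 1 ≤ j → (j:ℝ) * Δt ≤ 2/μ → 4 * (lam + 1) ≤ κ * bcoef (1-α) j := by
    intro j hj hjd
    have hj0 : (0:ℝ) < (j:ℝ) := by exact_mod_cast hj
    have hb := bcoef_lower hβ0 hβ1 hj
    rw [show (1 - α) - 1 = -α by ring] at hb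
    have hmulr : ((j:ℝ) * Δt) ^ (-α : ℝ) = (j:ℝ) ^ (-α:ℝ) * Δt ^ (-α:ℝ) :=
      Real.mul_rpow hj0.le hΔt0.le
    have h2μ : (0:ℝ) < 2/μ := div_pos two_pos hμpos
    have hjΔt0 : (0:ℝ) < (j:ℝ) * Δt := mul_pos hj0 hΔt0
    have hmono : (2/μ) ^ (-α:ℝ) ≤ ((j:ℝ) * Δt) ^ (-α:ℝ) := by
      rw [Real.rpow_neg h2μ.le, Real.rpow_neg hjΔt0.le]
      have hc := Real.rpow_le_rpow hjΔt0.le hjd hα0.le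
      exact inv_anti₀ (Real.rpow_pos_of_pos hjΔt0 _) hc
    have heq : (2/μ) ^ (-α:ℝ) = (μ/2) ^ (α:ℝ) := by
      rw [Real.rpow_neg h2μ.le, Real.div_rpow (by norm_num) hμpos.le,
        Real.div_rpow hμpos.le (by norm_num), inv_div]
    have h2α : (2:ℝ) ^ (α:ℝ) ≤ 2 := by
      calc (2:ℝ)^(α:ℝ) ≤ (2:ℝ)^(1:ℝ) := Real.rpow_le_rpow_of_exponent_le one_le_two hα1.le
      _ = 2 := Real.rpow_one 2
    have h2αpos : (0:ℝ) < 2 ^ (α:ℝ) := Real.rpow_pos_of_pos two_pos _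
    have hμ2 : μ ^ (α:ℝ) / 2 ≤ (μ/2)^(α:ℝ) := by
      rw [Real.div_rpow hμpos.le (by norm_num)]
      gcongr
    have hcoefpos : (0:ℝ) ≤ (1-α)/Real.Gamma (2-α) := (div_pos hβ0 hΓ).le
    have hfinal : (1-α)/Real.Gamma (2-α) * (X/2) = 4*(lam+1) := by
      rw [hXdef]; field_simp; ring
    calc 4*(lam+1) = (1-α)/Real.Gamma (2-α) * (X/2) := hfinal.symm
    _ = (1-α)/Real.Gamma (2-α) * (μ^(α:ℝ)/2) := by rw [hμα]
    _ ≤ (1-α)/Real.Gamma (2-α) * ((μ/2)^(α:ℝ)) :=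
        mul_le_mul_of_nonneg_left hμ2 hcoefpos
    _ = (1-α)/Real.Gamma (2-α) * ((2/μ)^(-α:ℝ)) := by rw [heq]
    _ ≤ (1-α)/Real.Gamma (2-α) * (((j:ℝ)*Δt)^(-α:ℝ)) :=
        mul_le_mul_of_nonneg_left hmono hcoefpos
    _ = κ * ((1-α) * (j:ℝ)^(-α:ℝ)) := by rw [hκdef, hmulr]; ring
    _ ≤ κ * bcoef (1-α) j := mul_le_mul_of_nonneg_left hb hκpos.le
  -- main induction
  have main : ∀ n : ℕ, n ≤ N → w n ≤ 2 * Real.exp (μ * ((n:ℝ) * Δt)) * (w 0 + g) := by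
    intro n
    induction n using Nat.strong_induction_on with
    | _ n ih =>
      intro hnN
      rcases Nat.eq_zero_or_pos n with hn0 | hn1
      · subst hn0
        simp only [Nat.cast_zero, zero_mul, mul_zero, Real.exp_zero, mul_one]
        have := hw 0 (Nat.zero_le N)
        linarith only [this, hg]
      · obtain ⟨m, rfl⟩ : ∃ m, n = m + 1 := ⟨n-1, by omega⟩
        have hrec' := hrec2 (m+1) (Finset.mem_Icc.mpr ⟨by omega, hnN⟩)
        rw [L1delta, L1_identity (1-α) w m, bcoef_one hβ0, one_mul, ← hκdef] at hrec'
        obtain ⟨E, hEdef⟩ : ∃ x : ℝ, x = Real.exp (μ * (((m+1 : ℕ) : ℝ) * Δt)) := ⟨_, rfl⟩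
        have hE1' : (1:ℝ) ≤ E := by
          rw [hEdef]
          exact Real.one_le_exp
            (mul_nonneg hμpos.le (mul_nonneg (Nat.cast_nonneg _) hΔt0.le))
        have hE0 : (0:ℝ) < E := by linarith only [hE1']
        have hbpos : 0 < bcoef (1-α) (m+1) := bcoef_pos hβ0 hβ1 (by omega)
        have hc_nonneg : ∀ i, i < m → 0 ≤ bcoef (1-α) (m-i) - bcoef (1-α) (m+1-i) := by
          intro i hi'
          have h1m : 1 ≤ m - i := by omega
          have h := bcoef_anti hβ0 hβ1 h1m
          rw [show m - i + 1 = m + 1 - i by omega] at h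
          linarith only [h]
        have htel : ∀ M : ℕ,
            ∑ i ∈ Finset.range M, (bcoef (1-α) (m-i) - bcoef (1-α) (m+1-i))
              = bcoef (1-α) (m+1-M) - bcoef (1-α) (m+1) := by
          intro M
          have h := Finset.sum_range_sub (fun i => bcoef (1-α) (m+1-i)) M
          simp only [Nat.succ_sub_succ, Nat.sub_zero] at h
          exact h
        have hEge : ∀ i, i < m → Real.exp (μ * (((i+1:ℕ):ℝ) * Δt)) ≤ E := by
          intro i hi
          rw [hEdef]
          apply Real.exp_le_exp.mpr
          have hc : ((i:ℝ)+1) ≤ (m:ℝ)+1 := by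
            have : (i:ℝ) ≤ (m:ℝ) := by exact_mod_cast hi.le
            linarith
          push_cast
          exact mul_le_mul_of_nonneg_left
            (mul_le_mul_of_nonneg_right hc hΔt0.le) hμpos.le
        have hDnonneg : 0 ≤ ∑ i ∈ Finset.range m,
            (bcoef (1-α) (m-i) - bcoef (1-α) (m+1-i)) * (E - Real.exp (μ * (((i+1:ℕ):ℝ) * Δt))) :=
          Finset.sum_nonneg fun i hi =>
            mul_nonneg (hc_nonneg i (Finset.mem_range.mp hi))
              (sub_nonneg.mpr (hEge i (Finset.mem_range.mp hi)))
        have hS2eq : ∑ i ∈ Finset.range m,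
            (bcoef (1-α) (m-i) - bcoef (1-α) (m+1-i)) * Real.exp (μ * (((i+1:ℕ):ℝ) * Δt))
            = E * (1 - bcoef (1-α) (m+1))
              - ∑ i ∈ Finset.range m, (bcoef (1-α) (m-i) - bcoef (1-α) (m+1-i))
                  * (E - Real.exp (μ * (((i+1:ℕ):ℝ) * Δt))) := by
          have h := htel m
          rw [show m+1-m = 1 by omega, bcoef_one hβ0] at h
          have h2 : ∑ i ∈ Finset.range m,
              (bcoef (1-α) (m-i) - bcoef (1-α) (m+1-i)) * Real.exp (μ * (((i+1:ℕ):ℝ) * Δt))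
              = ∑ i ∈ Finset.range m, ((bcoef (1-α) (m-i) - bcoef (1-α) (m+1-i)) * E
                - (bcoef (1-α) (m-i) - bcoef (1-α) (m+1-i))
                    * (E - Real.exp (μ * (((i+1:ℕ):ℝ) * Δt)))) :=
            Finset.sum_congr rfl fun i _ => by ring
          rw [h2, Finset.sum_sub_distrib, ← Finset.sum_mul, h]
          ring
        -- key inequality
        have hkey : 1 + κ * bcoef (1-α) (m+1)
            + 2 * lam * E ≤ 2 * κ * E * bcoef (1-α) (m+1)
              + 2 * κ * ∑ i ∈ Finset.range m, (bcoef (1-α) (m-i) - bcoef (1-α) (m+1-i))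
                  * (E - Real.exp (μ * (((i+1:ℕ):ℝ) * Δt))) := by
          rcases le_or_gt (((m+1 : ℕ):ℝ) * Δt) (2/μ) with hcase | hcase
          · exact gronwall_key_caseA hκpos hlam hbpos.le hE1' hDnonneg
              (hlow (m+1) (by omega) hcase)
          · -- case B
            obtain ⟨j₀, hj₀def⟩ : ∃ j : ℕ, j = ⌈1/(μ*Δt)⌉₊ := ⟨_, rfl⟩
            have hμΔt0 : 0 < μ * Δt := mul_pos hμpos hΔt0
            have hμΔtinv : (0:ℝ) < 1/(μ*Δt) := div_pos one_pos hμΔt0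
            have hj₀pos : 1 ≤ j₀ := by rw [hj₀def]; exact Nat.ceil_pos.mpr hμΔtinv
            have hceil : 1/(μ*Δt) ≤ (j₀ : ℝ) := by rw [hj₀def]; exact Nat.le_ceil _
            have hceil2 : (j₀ : ℝ) < 1/(μ*Δt) + 1 := by
              rw [hj₀def]; exact Nat.ceil_lt_add_one hμΔtinv.le
            have hinv1 : (1:ℝ) ≤ 1/(μ*Δt) := by
              rw [le_div_iff₀ hμΔt0, one_mul]; exact hμΔt
            have hj₀2 : (j₀ : ℝ) ≤ 2/(μ*Δt) := by
              have h22 : 2/(μ*Δt) = 1/(μ*Δt) + 1/(μ*Δt) := by ring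
              linarith only [h22, hceil2, hinv1]
            have hj₀Δt : (j₀:ℝ) * Δt ≤ 2/μ := by
              have h2 : 2/(μ*Δt) * Δt = 2/μ := by field_simp
              calc (j₀:ℝ)*Δt ≤ 2/(μ*Δt) * Δt := mul_le_mul_of_nonneg_right hj₀2 hΔt0.le
              _ = 2/μ := h2
            have hj₀m : j₀ ≤ m := by
              by_contra hcon
              push_neg at hcon
              have h1 : ((m:ℝ)+1) ≤ (j₀:ℝ) := by exact_mod_cast hcon
              have h2 : ((m:ℝ)+1)*Δt ≤ 2/μ :=
                le_trans (mul_le_mul_of_nonneg_right h1 hΔt0.le) hj₀Δt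
              push_cast at hcase
              linarith only [h2, hcase]
            have hlow0 := hlow j₀ hj₀pos hj₀Δt
            have hsub : ∀ i, i < m+1-j₀ → E/2 ≤ E - Real.exp (μ * (((i+1:ℕ):ℝ) * Δt)) := by
              intro i hi'
              have hmi : (j₀:ℝ) ≤ (m:ℝ) - (i:ℝ) := by
                have hx : j₀ + i ≤ m := by omega
                have h := (Nat.cast_le (α := ℝ)).mpr hx
                push_cast at h
                linarith only [h]
              have h1' : (1:ℝ) ≤ μ*Δt*(j₀:ℝ) := by
                calc (1:ℝ) = μ*Δt*(1/(μ*Δt)) := (mul_one_div_cancel hμΔt0.ne').symm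
                _ ≤ μ*Δt*(j₀:ℝ) := mul_le_mul_of_nonneg_left hceil hμΔt0.le
              have h2' : μ*Δt*(j₀:ℝ) ≤ μ*Δt*((m:ℝ)-(i:ℝ)) :=
                mul_le_mul_of_nonneg_left hmi hμΔt0.le
              have harg : μ * (((i+1:ℕ):ℝ) * Δt) ≤ μ * (((m+1:ℕ):ℝ) * Δt) - 1 := by
                push_cast
                linarith only [h1', h2']
              have hexp := Real.exp_le_exp.mpr harg
              rw [Real.exp_sub] at hexp
              have hexp1 : (2:ℝ) ≤ Real.exp 1 := by
                have := Real.add_one_le_exp 1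
                linarith only [this]
              have hdiv : Real.exp (μ * (((m+1:ℕ):ℝ) * Δt)) / Real.exp 1
                  ≤ Real.exp (μ * (((m+1:ℕ):ℝ) * Δt)) / 2 := by
                gcongr
              rw [← hEdef] at hexp hdiv
              linarith only [hexp, hdiv]
            have hDlow : (E/2) * (bcoef (1-α) j₀ - bcoef (1-α) (m+1))
                ≤ ∑ i ∈ Finset.range m, (bcoef (1-α) (m-i) - bcoef (1-α) (m+1-i))
                    * (E - Real.exp (μ * (((i+1:ℕ):ℝ) * Δt))) := by
              have htel2 := htel (m+1-j₀)
              rw [show m+1-(m+1-j₀) = j₀ by omega] at htel2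
              calc (E/2) * (bcoef (1-α) j₀ - bcoef (1-α) (m+1))
                  = ∑ i ∈ Finset.range (m+1-j₀),
                      (bcoef (1-α) (m-i) - bcoef (1-α) (m+1-i)) * (E/2) := by
                    rw [← Finset.sum_mul, htel2]; ring
              _ ≤ ∑ i ∈ Finset.range (m+1-j₀),
                    (bcoef (1-α) (m-i) - bcoef (1-α) (m+1-i))
                      * (E - Real.exp (μ * (((i+1:ℕ):ℝ) * Δt))) :=
                  Finset.sum_le_sum fun i hi =>
                    mul_le_mul_of_nonneg_left (hsub i (Finset.mem_range.mp hi))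
                      (hc_nonneg i (by have := Finset.mem_range.mp hi; omega))
              _ ≤ ∑ i ∈ Finset.range m, (bcoef (1-α) (m-i) - bcoef (1-α) (m+1-i))
                    * (E - Real.exp (μ * (((i+1:ℕ):ℝ) * Δt))) :=
                  Finset.sum_le_sum_of_subset_of_nonneg
                    (Finset.range_subset_range.mpr (by omega))
                    (fun i hi _ => mul_nonneg (hc_nonneg i (Finset.mem_range.mp hi))
                      (sub_nonneg.mpr (hEge i (Finset.mem_range.mp hi))))
            exact gronwall_key_caseB hκpos hlam hbpos.le hE1' hlow0 hDlow
        -- assemble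
        have hSwle : ∑ i ∈ Finset.range m,
            (bcoef (1-α) (m-i) - bcoef (1-α) (m+1-i)) * w (i+1)
            ≤ 2 * (∑ i ∈ Finset.range m,
                (bcoef (1-α) (m-i) - bcoef (1-α) (m+1-i))
                  * Real.exp (μ * (((i+1:ℕ):ℝ) * Δt))) * (w 0 + g) := by
          calc ∑ i ∈ Finset.range m, (bcoef (1-α) (m-i) - bcoef (1-α) (m+1-i)) * w (i+1)
              ≤ ∑ i ∈ Finset.range m, (bcoef (1-α) (m-i) - bcoef (1-α) (m+1-i))
                  * (2 * Real.exp (μ * (((i+1:ℕ):ℝ) * Δt)) * (w 0 + g)) :=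
              Finset.sum_le_sum fun i hi =>
                mul_le_mul_of_nonneg_left
                  (ih (i+1) (by have := Finset.mem_range.mp hi; omega)
                    (by have := Finset.mem_range.mp hi; omega))
                  (hc_nonneg i (Finset.mem_range.mp hi))
          _ = 2 * (∑ i ∈ Finset.range m,
                (bcoef (1-α) (m-i) - bcoef (1-α) (m+1-i))
                  * Real.exp (μ * (((i+1:ℕ):ℝ) * Δt))) * (w 0 + g) := by
              rw [Finset.mul_sum, Finset.sum_mul]
              exact Finset.sum_congr rfl fun i _ => by ring
        have h0w : 0 ≤ w 0 := hw 0 (Nat.zero_le N)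
        have hgoal : w (m+1) ≤ 2 * E * (w 0 + g) :=
          gronwall_step hrec' hS2eq hSwle hkey hκpos hκlam hbpos.le h0w hg hE1'
        rw [hEdef] at hgoal
        exact hgoal
  -- conclude
  intro n hnN
  have h1 := main n hnN
  have hn' : (n:ℝ) ≤ (N:ℝ) := by exact_mod_cast hnN
  have h2 : μ * ((n:ℝ) * Δt) ≤ μ * T := by
    have h3 : (n:ℝ) * Δt ≤ T := by
      rw [hΔtdef]
      calc (n:ℝ) * (T/(N:ℝ)) = T * ((n:ℝ)/(N:ℝ)) := by ring
      _ ≤ T * 1 := mul_le_mul_of_nonneg_left (by rw [div_le_one hN0]; exact hn') hT.le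
      _ = T := mul_one T
    exact mul_le_mul_of_nonneg_left h3 hμpos.le
  have h4 := Real.exp_le_exp.mpr h2
  have hw0g : 0 ≤ w 0 + g := by linarith only [hw 0 (Nat.zero_le N), hg]
  calc w n ≤ 2 * Real.exp (μ * ((n:ℝ) * Δt)) * (w 0 + g) := h1
  _ ≤ 2 * Real.exp (μ * T) * (w 0 + g) :=
    mul_le_mul_of_nonneg_right
      (mul_le_mul_of_nonneg_left h4 (by norm_num : (0:ℝ) ≤ 2)) hw0g
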